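/- arXiv:1512.02335 — 4 statements merged into one kernel-verified Lean document; each statement's English description precedes it below -/
import Mathlib

section
/- Let M ≥ 2 and let θ : (ZMod M) × (ZMod M) → ℝ be a phase configuration on the M × M periodic lattice such that for every pair of nearest-neighbor sites (i.e., sites differing by 1 in exactly one coordinate, with periodic identification) the difference of phases is not congruent to π modulo 2π. For each cell (i, j) let C(i,j) be the lattice curl of the 4-tuple (θ(i,j), θ(i+1,j), θ(i+1,j+1), θ(i,j+1)). Then the sum of C(i,j) over all M² cells equals 0. -/
open Real Finset

/-- `wrap x` is the unique number in the interval `(-π, π]` congruent to `x` modulo `2π`. -/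
noncomputable def wrap (x : ℝ) : ℝ := toIocMod Real.two_pi_pos (-Real.pi) x

/-- `x` is not congruent to `π` modulo `2π`. -/
def NotPiMod (x : ℝ) : Prop := ∀ k : ℤ, x ≠ Real.pi + 2 * Real.pi * k

lemma wrap_neg {x : ℝ} (h : NotPiMod x) : wrap (-x) = - wrap x := by
  have hx : wrap x ∈ Set.Ioc (-Real.pi) (-Real.pi + 2 * Real.pi) ∧
      ∃ z : ℤ, x = wrap x + z • (2 * Real.pi) := by
    rw [← toIocMod_eq_iff Real.two_pi_pos]; rfl
  obtain ⟨⟨h1, h2⟩, z, hz⟩ := hx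
  have hne : wrap x ≠ Real.pi := by
    intro he
    apply h z
    rw [hz, he]
    push_cast [zsmul_eq_mul]
    ring
  have hlt : wrap x < Real.pi := lt_of_le_of_ne (by linarith) hne
  rw [wrap, toIocMod_eq_iff Real.two_pi_pos]
  refine ⟨⟨by linarith, by linarith⟩, -z, ?_⟩
  push_cast [zsmul_eq_mul] at hz ⊢
  linarith

/-- The lattice curl of the cell of the `M × M` periodic lattice with lower-left corner
`(i, j)`, whose corners in cyclic order are `(i,j), (i+1,j), (i+1,j+1), (i,j+1)`. -/
noncomputable def latticeCurl {M : ℕ} (θ : ZMod M × ZMod M → ℝ) (i j : ZMod M) : ℝ :=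
  wrap (θ (i + 1, j) - θ (i, j)) + wrap (θ (i + 1, j + 1) - θ (i + 1, j)) +
    wrap (θ (i, j + 1) - θ (i + 1, j + 1)) + wrap (θ (i, j) - θ (i, j + 1))

/-- On the `M × M` torus (`M ≥ 2`), if no nearest-neighbor phase difference is congruent
to `π` mod `2π`, then the sum of the lattice curls over all `M²` cells is `0`. -/
theorem sum_latticeCurl_torus (M : ℕ) [NeZero M] (hM : 2 ≤ M)
    (θ : ZMod M × ZMod M → ℝ)
    (hE : ∀ i j : ZMod M, NotPiMod (θ (i + 1, j) - θ (i, j)))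
    (hN : ∀ i j : ZMod M, NotPiMod (θ (i, j + 1) - θ (i, j))) :
    ∑ c : ZMod M × ZMod M, latticeCurl θ c.1 c.2 = 0 := by
  set E : ZMod M × ZMod M → ℝ := fun c => wrap (θ (c.1 + 1, c.2) - θ (c.1, c.2)) with hEdef
  set N : ZMod M × ZMod M → ℝ := fun c => wrap (θ (c.1, c.2 + 1) - θ (c.1, c.2)) with hNdef
  have hcurl : ∀ c : ZMod M × ZMod M, latticeCurl θ c.1 c.2 =
      E c - E (c.1, c.2 + 1) + (N (c.1 + 1, c.2) - N c) := by
    intro c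
    have h3 : wrap (θ (c.1, c.2 + 1) - θ (c.1 + 1, c.2 + 1)) = - E (c.1, c.2 + 1) := by
      have := wrap_neg (hE c.1 (c.2 + 1))
      rw [neg_sub] at this
      simpa [hEdef] using this
    have h4 : wrap (θ (c.1, c.2) - θ (c.1, c.2 + 1)) = - N c := by
      have := wrap_neg (hN c.1 c.2)
      rw [neg_sub] at this
      simpa [hNdef] using this
    simp only [latticeCurl, hEdef, hNdef, h3, h4]
    ring
  rw [Finset.sum_congr rfl (fun c _ => hcurl c)]
  rw [Finset.sum_add_distrib, Finset.sum_sub_distrib, Finset.sum_sub_distrib]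
  have e1 : ∑ c : ZMod M × ZMod M, E (c.1, c.2 + 1) = ∑ c : ZMod M × ZMod M, E c :=
    Fintype.sum_equiv ((Equiv.refl (ZMod M)).prodCongr (Equiv.addRight 1)) _ _
      (fun c => rfl)
  have e2 : ∑ c : ZMod M × ZMod M, N (c.1 + 1, c.2) = ∑ c : ZMod M × ZMod M, N c :=
    Fintype.sum_equiv ((Equiv.addRight 1).prodCongr (Equiv.refl (ZMod M))) _ _
      (fun c => rfl)
  rw [e1, e2]
  ring
end

section
/- Let θ1, θ2, θ3, θ4 : [0, T] → ℝ be continuous functions such that for every t ∈ [0, T], none of the cyclic differences θ2(t)−θ1(t), θ3(t)−θ2(t), θ4(t)−θ3(t), θ1(t)−θ4(t) is congruent to π modulo 2π. Then the lattice curl C(t) = ⟦θ2(t)−θ1(t)⟧ + ⟦θ3(t)−θ2(t)⟧ + ⟦θ4(t)−θ3(t)⟧ + ⟦θ1(t)−θ4(t)⟧ is constant on [0, T]. (A phase vortex is a topological object conserved under continuous evolution as long as no edge of the cell slips through a phase difference of π.) -/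
open Real Set

lemma wrap_continuousAt {x : ℝ} (hx : NotPiMod x) : ContinuousAt wrap x := by
  apply continuousAt_toIocMod
  intro h
  rw [AddCommGroup.modEq_comm, AddCommGroup.modEq_iff_zsmul] at h
  obtain ⟨k, hk⟩ := h
  apply hx (k - 1)
  have : (k : ℝ) * (2 * Real.pi) = x - -Real.pi := by
    simpa [zsmul_eq_mul] using hk
  push_cast
  linarith

lemma wrap_sub (x : ℝ) : ∃ k : ℤ, wrap x = x - 2 * Real.pi * k := by
  refine ⟨toIocDiv Real.two_pi_pos (-Real.pi) x, ?_⟩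
  have := self_sub_toIocMod Real.two_pi_pos (-Real.pi) x
  rw [zsmul_eq_mul] at this
  unfold wrap
  linarith

/-- If the four corner phases of a unit cell evolve continuously on `[0, T]` and no cyclic
difference ever passes through `π` mod `2π`, then the lattice curl
`C(t) = ⟦θ2−θ1⟧ + ⟦θ3−θ2⟧ + ⟦θ4−θ3⟧ + ⟦θ1−θ4⟧` is constant on `[0, T]`:
a phase vortex is a conserved topological object. -/
theorem latticeCurl_constant_of_continuous (T : ℝ) (θ1 θ2 θ3 θ4 : ℝ → ℝ)
    (hc1 : ContinuousOn θ1 (Icc 0 T)) (hc2 : ContinuousOn θ2 (Icc 0 T))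
    (hc3 : ContinuousOn θ3 (Icc 0 T)) (hc4 : ContinuousOn θ4 (Icc 0 T))
    (h12 : ∀ t ∈ Icc (0 : ℝ) T, NotPiMod (θ2 t - θ1 t))
    (h23 : ∀ t ∈ Icc (0 : ℝ) T, NotPiMod (θ3 t - θ2 t))
    (h34 : ∀ t ∈ Icc (0 : ℝ) T, NotPiMod (θ4 t - θ3 t))
    (h41 : ∀ t ∈ Icc (0 : ℝ) T, NotPiMod (θ1 t - θ4 t)) :
    ∀ s ∈ Icc (0 : ℝ) T, ∀ t ∈ Icc (0 : ℝ) T,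
      wrap (θ2 s - θ1 s) + wrap (θ3 s - θ2 s) + wrap (θ4 s - θ3 s) + wrap (θ1 s - θ4 s) =
      wrap (θ2 t - θ1 t) + wrap (θ3 t - θ2 t) + wrap (θ4 t - θ3 t) + wrap (θ1 t - θ4 t) := by
  set f : ℝ → ℝ := fun t =>
    wrap (θ2 t - θ1 t) + wrap (θ3 t - θ2 t) + wrap (θ4 t - θ3 t) + wrap (θ1 t - θ4 t) with hf
  have hfc : ContinuousOn f (Icc 0 T) := by
    apply ContinuousOn.add
    apply ContinuousOn.add
    apply ContinuousOn.add
    · intro t ht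
      exact ContinuousAt.comp_continuousWithinAt (wrap_continuousAt (h12 t ht))
        ((hc2.sub hc1) t ht) (f := fun x => θ2 x - θ1 x)
    · intro t ht
      exact ContinuousAt.comp_continuousWithinAt (wrap_continuousAt (h23 t ht))
        ((hc3.sub hc2) t ht) (f := fun x => θ3 x - θ2 x)
    · intro t ht
      exact ContinuousAt.comp_continuousWithinAt (wrap_continuousAt (h34 t ht))
        ((hc4.sub hc3) t ht) (f := fun x => θ4 x - θ3 x)
    · intro t ht
      exact ContinuousAt.comp_continuousWithinAt (wrap_continuousAt (h41 t ht))
        ((hc1.sub hc4) t ht) (f := fun x => θ1 x - θ4 x)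
  have hint : ∀ t, ∃ k : ℤ, f t = 2 * Real.pi * k := by
    intro t
    obtain ⟨k1, e1⟩ := wrap_sub (θ2 t - θ1 t)
    obtain ⟨k2, e2⟩ := wrap_sub (θ3 t - θ2 t)
    obtain ⟨k3, e3⟩ := wrap_sub (θ4 t - θ3 t)
    obtain ⟨k4, e4⟩ := wrap_sub (θ1 t - θ4 t)
    refine ⟨-(k1 + k2 + k3 + k4), ?_⟩
    simp only [hf]
    push_cast
    rw [e1, e2, e3, e4]
    ring
  intro s hs t ht
  by_contra hne
  -- the midpoint-ish value f s ± π is attained, contradiction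
  obtain ⟨ks, eks⟩ := hint s
  obtain ⟨kt, ekt⟩ := hint t
  have hpi := Real.pi_pos
  have hks : ks ≠ kt := by
    intro h
    exact hne (show f s = f t by rw [eks, ekt, h])
  have gap : |f s - f t| ≥ 2 * Real.pi := by
    rw [eks, ekt, ← mul_sub, abs_mul, abs_of_pos (by linarith : (0:ℝ) < 2 * Real.pi)]
    have : (1 : ℝ) ≤ |(ks : ℝ) - kt| := by
      rw [← Int.cast_sub, ← Int.cast_abs]
      exact_mod_cast Int.one_le_abs (sub_ne_zero.mpr hks)
    nlinarith
  -- value v between f s and f t with v = f s + π or f s - π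
  have key : ∀ u ∈ Icc (0:ℝ) T, f u ≠ f s + Real.pi ∧ f u ≠ f s - Real.pi := by
    intro u hu
    obtain ⟨ku, eku⟩ := hint u
    constructor <;> intro h <;> rw [eku, eks] at h
    · have : Real.pi * (2 * ku - 2 * ks - 1) = 0 := by linarith
      rcases mul_eq_zero.1 this with h' | h'
      · linarith
      · have : (2 * ku - 2 * ks - 1 : ℤ) = 0 := by exact_mod_cast h'
        omega
    · have : Real.pi * (2 * ku - 2 * ks + 1) = 0 := by linarith
      rcases mul_eq_zero.1 this with h' | h'
      · linarith
      · have : (2 * ku - 2 * ks + 1 : ℤ) = 0 := by exact_mod_cast h'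
        omega
  have hsub : Icc (min s t) (max s t) ⊆ Icc 0 T := by
    intro u hu
    constructor
    · exact le_trans (le_min hs.1 ht.1) hu.1
    · exact le_trans hu.2 (max_le hs.2 ht.2)
  have hfc' : ContinuousOn f (Icc (min s t) (max s t)) := hfc.mono hsub
  rcases le_or_gt (f s) (f t) with hle | hlt
  · have hmem : f s + Real.pi ∈ Icc (f s) (f t) := by
      rw [abs_sub_comm, abs_of_nonneg (by linarith)] at gap
      constructor <;> linarith
    rcases le_total s t with hst | hst
    · have := intermediate_value_Icc hst (by simpa [min_eq_left hst, max_eq_right hst] using hfc')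
      obtain ⟨u, hu, hfu⟩ := this hmem
      exact (key u (hsub (by simpa [min_eq_left hst, max_eq_right hst] using hu))).1 hfu
    · have := intermediate_value_Icc' hst (by simpa [min_eq_right hst, max_eq_left hst] using hfc')
      obtain ⟨u, hu, hfu⟩ := this hmem
      exact (key u (hsub (by simpa [min_eq_right hst, max_eq_left hst] using hu))).1 hfu
  · have hmem : f s - Real.pi ∈ Icc (f t) (f s) := by
      rw [abs_of_nonneg (by linarith)] at gap
      constructor <;> linarith
    rcases le_total s t with hst | hst
    · have := intermediate_value_Icc' hst (by simpa [min_eq_left hst, max_eq_right hst] using hfc')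
      obtain ⟨u, hu, hfu⟩ := this hmem
      exact (key u (hsub (by simpa [min_eq_left hst, max_eq_right hst] using hu))).2 hfu
    · have := intermediate_value_Icc hst (by simpa [min_eq_right hst, max_eq_left hst] using hfc')
      obtain ⟨u, hu, hfu⟩ := this hmem
      exact (key u (hsub (by simpa [min_eq_right hst, max_eq_left hst] using hu))).2 hfu
end

section
/- Let κ = 1 + √2. There exist constants C > 0 and ε₀ ∈ (0, 1) such that for all ε ∈ (0, ε₀) the following holds: set Ω = 1 − 2ε², ζ(t) = (Ω/ε)·t, and θ_i(t) = ε·(1/(2κ) − cos(ζ(t) − iπ/2)) for i = 0, 1, 2, 3. Then for all t ∈ ℝ, | (1/ε) − Σ_{i=0}^{3} sin(ζ(t) − θ_i(t) − iπ/2) − Ω/ε | ≤ C·ε³. (This verifies, to the stated order, the Lindstedt-series prediction that the frequency spiral of the minimal model with large central frequency ω = 1/ε rotates with normalized angular frequency Ω = 1 − 2ε² + O(ε⁴): the leading-order periodic ansatz satisfies the ζ-equation of the minimal model with residual O(ε³).) -/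
open Real

private lemma sin_taylor_aux (y θ sx cx : ℝ) (hs : Real.sin y = sx) (hc : Real.cos y = cx)
    (h : |θ| ≤ 1) :
    |Real.sin (y - θ) - (sx - θ * cx - θ ^ 2 / 2 * sx)| ≤ |θ| ^ 3 := by
  subst hs hc
  have hsb := Real.sin_bound h
  have hcb := Real.cos_bound h
  have e : Real.sin (y - θ) - (Real.sin y - θ * Real.cos y - θ ^ 2 / 2 * Real.sin y)
      = Real.sin y * (Real.cos θ - (1 - θ ^ 2 / 2)) - Real.cos y * (Real.sin θ - θ) := by
    rw [Real.sin_sub]; ring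
  rw [e]
  have h4 : |θ| ^ 4 ≤ |θ| ^ 3 := pow_le_pow_of_le_one (abs_nonneg θ) h (by norm_num)
  have hpos : 0 ≤ |θ| ^ 3 := pow_nonneg (abs_nonneg θ) 3
  have hst : |Real.sin θ - θ| ≤ |θ| ^ 4 * (5 / 96) + |θ| ^ 3 / 6 := by
    have e2 : Real.sin θ - θ = (Real.sin θ - (θ - θ ^ 3 / 6)) + (- (θ ^ 3) / 6) := by ring
    have e3 : |(- (θ ^ 3)) / 6| = |θ| ^ 3 / 6 := by
      rw [abs_div, abs_neg, abs_pow]; norm_num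
    calc |Real.sin θ - θ| = |(Real.sin θ - (θ - θ ^ 3 / 6)) + (- (θ ^ 3) / 6)| := by rw [e2]
      _ ≤ |Real.sin θ - (θ - θ ^ 3 / 6)| + |(- (θ ^ 3)) / 6| := abs_add_le _ _
      _ ≤ |θ| ^ 4 * (5 / 96) + |θ| ^ 3 / 6 := by rw [e3]; linarith [pow_le_pow_of_le_one (abs_nonneg θ) h (by norm_num : 4 ≤ 5), pow_nonneg (abs_nonneg θ) 4]
  have hA : |Real.sin y * (Real.cos θ - (1 - θ ^ 2 / 2))| ≤ |Real.cos θ - (1 - θ ^ 2 / 2)| := by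
    rw [abs_mul]
    nlinarith [Real.abs_sin_le_one y, abs_nonneg (Real.cos θ - (1 - θ ^ 2 / 2)),
      abs_nonneg (Real.sin y)]
  have hB : |Real.cos y * (Real.sin θ - θ)| ≤ |Real.sin θ - θ| := by
    rw [abs_mul]
    nlinarith [Real.abs_cos_le_one y, abs_nonneg (Real.sin θ - θ), abs_nonneg (Real.cos y)]
  have h1 : |Real.sin y * (Real.cos θ - (1 - θ ^ 2 / 2)) - Real.cos y * (Real.sin θ - θ)|
      ≤ |Real.sin y * (Real.cos θ - (1 - θ ^ 2 / 2))| + |Real.cos y * (Real.sin θ - θ)| :=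
    abs_sub _ _
  linarith

/-- Lindstedt-series verification for the minimal frequency-spiral model (`κ = 1+√2`,
large central frequency `ω = 1/ε`): with `Ω = 1 − 2ε²`, `ζ(t) = (Ω/ε)t`, and
`θ_i(t) = ε(1/(2κ) − cos(ζ(t) − iπ/2))`, the leading-order periodic ansatz satisfies
the `ζ`-equation `dζ/dt = 1/ε − Σ_{i=0}^{3} sin(ζ − θ_i − iπ/2)` with residual `O(ε³)`,
uniformly in `t`. (For this ansatz `dζ/dt = Ω/ε` exactly.) -/
theorem minimalSpiral_lindstedt_zeta_residual :
    ∃ C : ℝ, 0 < C ∧ ∃ ε₀ : ℝ, 0 < ε₀ ∧ ε₀ < 1 ∧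
      ∀ ε : ℝ, 0 < ε → ε < ε₀ → ∀ t : ℝ,
        let κ : ℝ := 1 + Real.sqrt 2
        let Ω : ℝ := 1 - 2 * ε ^ 2
        let ζ : ℝ := (Ω / ε) * t
        let θ : ℕ → ℝ := fun i => ε * (1 / (2 * κ) - Real.cos (ζ - (i : ℝ) * (Real.pi / 2)))
        |1 / ε -
            (Real.sin (ζ - θ 0) + Real.sin (ζ - θ 1 - Real.pi / 2) +
              Real.sin (ζ - θ 2 - Real.pi) + Real.sin (ζ - θ 3 - 3 * Real.pi / 2)) -
            Ω / ε| ≤ C * ε ^ 3 := by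
  refine ⟨16, by norm_num, 1/2, by norm_num, by norm_num, ?_⟩
  intro ε hε hε₀ t
  dsimp only
  simp only [Nat.cast_zero, Nat.cast_one, Nat.cast_ofNat]
  set a : ℝ := 1 / (2 * (1 + Real.sqrt 2)) with ha
  set ζ : ℝ := (1 - 2 * ε ^ 2) / ε * t with hζ
  set s : ℝ := Real.sin ζ with hs
  set c : ℝ := Real.cos ζ with hc
  -- bounds on a
  have hsqrt : (1 : ℝ) ≤ Real.sqrt 2 := by
    rw [show (1:ℝ) = Real.sqrt 1 by simp]
    exact Real.sqrt_le_sqrt (by norm_num)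
  have ha0 : 0 < a := by
    rw [ha]; positivity
  have ha1 : a ≤ 1 / 2 := by
    rw [ha, div_le_iff₀ (by positivity)]
    nlinarith
  -- cos values at the four phases
  have h0 : Real.cos (ζ - 0 * (Real.pi / 2)) = c := by norm_num [hc]
  have h1 : Real.cos (ζ - 1 * (Real.pi / 2)) = s := by
    rw [one_mul, Real.cos_sub]; simp [hs]
  have h2 : Real.cos (ζ - 2 * (Real.pi / 2)) = -c := by
    rw [show ζ - 2 * (Real.pi / 2) = ζ - Real.pi by ring, Real.cos_sub]; simp [hc]
  have h3 : Real.cos (ζ - 3 * (Real.pi / 2)) = -s := by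
    rw [show ζ - 3 * (Real.pi / 2) = ζ - (Real.pi + Real.pi / 2) by ring, Real.cos_sub,
      Real.cos_add, Real.sin_add]
    simp [hs]
  rw [h0, h1, h2, h3]
  -- the four perturbations
  set e0 : ℝ := ε * (a - c) with he0
  set e1 : ℝ := ε * (a - s) with he1
  set e2 : ℝ := ε * (a - -c) with he2
  set e3 : ℝ := ε * (a - -s) with he3
  have hcb : -1 ≤ c ∧ c ≤ 1 := ⟨Real.neg_one_le_cos ζ, Real.cos_le_one ζ⟩
  have hsb : -1 ≤ s ∧ s ≤ 1 := ⟨Real.neg_one_le_sin ζ, Real.sin_le_one ζ⟩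
  have key_bound : ∀ x : ℝ, -1 ≤ x → x ≤ 1 → |ε * (a - x)| ≤ 3 / 2 * ε := by
    intro x hx1 hx2
    rw [abs_le]
    constructor <;> nlinarith
  have hb0 : |e0| ≤ 3 / 2 * ε := key_bound c hcb.1 hcb.2
  have hb1 : |e1| ≤ 3 / 2 * ε := key_bound s hsb.1 hsb.2
  have hb2 : |e2| ≤ 3 / 2 * ε := key_bound (-c) (by linarith [hcb.2]) (by linarith [hcb.1])
  have hb3 : |e3| ≤ 3 / 2 * ε := key_bound (-s) (by linarith [hsb.2]) (by linarith [hsb.1])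
  have hone : (3 : ℝ) / 2 * ε ≤ 1 := by linarith
  have hcube : ∀ x : ℝ, |x| ≤ 3 / 2 * ε → |x| ^ 3 ≤ 27 / 8 * ε ^ 3 := by
    intro x hx
    calc |x| ^ 3 ≤ (3 / 2 * ε) ^ 3 := pow_le_pow_left₀ (abs_nonneg x) hx 3
      _ = 27 / 8 * ε ^ 3 := by ring
  -- Taylor estimates for the four sine terms
  have E0 := sin_taylor_aux ζ e0 s c rfl rfl (le_trans hb0 hone)
  have E1 := sin_taylor_aux (ζ - Real.pi / 2) e1 (-c) s
    (by rw [Real.sin_sub]; simp [hs, hc]) (by rw [Real.cos_sub]; simp [hs, hc]) (le_trans hb1 hone)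
  have E2 := sin_taylor_aux (ζ - Real.pi) e2 (-s) (-c)
    (by rw [Real.sin_sub]; simp [hs, hc]) (by rw [Real.cos_sub]; simp [hs, hc]) (le_trans hb2 hone)
  have E3 := sin_taylor_aux (ζ - 3 * Real.pi / 2) e3 c (-s)
    (by rw [show ζ - 3 * Real.pi / 2 = ζ - (Real.pi + Real.pi / 2) by ring, Real.sin_sub,
        Real.cos_add, Real.sin_add]; simp [hs, hc])
    (by rw [show ζ - 3 * Real.pi / 2 = ζ - (Real.pi + Real.pi / 2) by ring, Real.cos_sub,
        Real.cos_add, Real.sin_add]; simp [hs, hc])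
    (le_trans hb3 hone)
  -- rewrite arguments to match
  rw [show ζ - e1 - Real.pi / 2 = (ζ - Real.pi / 2) - e1 by ring,
      show ζ - e2 - Real.pi = (ζ - Real.pi) - e2 by ring,
      show ζ - e3 - 3 * Real.pi / 2 = (ζ - 3 * Real.pi / 2) - e3 by ring]
  have hfrac : 1 / ε - (1 - 2 * ε ^ 2) / ε = 2 * ε := by
    field_simp
    ring
  set d0 : ℝ := Real.sin (ζ - e0) - (s - e0 * c - e0 ^ 2 / 2 * s) with hd0
  set d1 : ℝ := Real.sin (ζ - Real.pi / 2 - e1) - (-c - e1 * s - e1 ^ 2 / 2 * (-c)) with hd1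
  set d2 : ℝ := Real.sin (ζ - Real.pi - e2) - (-s - e2 * (-c) - e2 ^ 2 / 2 * (-s)) with hd2
  set d3 : ℝ := Real.sin (ζ - 3 * Real.pi / 2 - e3) - (c - e3 * (-s) - e3 ^ 2 / 2 * c) with hd3
  set S : ℝ := Real.sin (ζ - e0) + Real.sin (ζ - Real.pi / 2 - e1) +
      Real.sin (ζ - Real.pi - e2) + Real.sin (ζ - 3 * Real.pi / 2 - e3) with hS
  have hgoal : 1 / ε - S - (1 - 2 * ε ^ 2) / ε = 2 * ε - S := by
    rw [show 1 / ε - S - (1 - 2 * ε ^ 2) / ε = (1 / ε - (1 - 2 * ε ^ 2) / ε) - S by ring, hfrac]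
  rw [hgoal]
  have pyth : s ^ 2 + c ^ 2 = 1 := Real.sin_sq_add_cos_sq ζ
  have key : 2 * ε - S = -(d0 + d1 + d2 + d3) := by
    rw [hS, hd0, hd1, hd2, hd3, he0, he1, he2, he3]
    linear_combination (-(2 * ε)) * pyth
  rw [key, abs_neg]
  have c0 := hcube e0 hb0
  have c1 := hcube e1 hb1
  have c2 := hcube e2 hb2
  have c3 := hcube e3 hb3
  have A1 : |d0 + d1 + d2 + d3| ≤ |d0 + d1 + d2| + |d3| := abs_add_le _ _
  have A2 : |d0 + d1 + d2| ≤ |d0 + d1| + |d2| := abs_add_le _ _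
  have A3 : |d0 + d1| ≤ |d0| + |d1| := abs_add_le _ _
  have hε3 : 0 < ε ^ 3 := pow_pos hε 3
  linarith [E0, E1, E2, E3]
end

section
/- Let κ = 1 + √2. There exist constants C > 0 and ε₀ ∈ (0, 1) such that for all ε ∈ (0, ε₀) the following holds: set Ω = 1 − 2ε², ζ(t) = (Ω/ε)·t, and θ_i(t) = ε·(1/(2κ) − cos(ζ(t) − iπ/2)) for i = 0, 1, 2, 3. Then for all t ∈ ℝ and each i ∈ {0, 1, 2, 3}, | d/dt θ_i(t) − ( sin(ζ(t) − θ_i(t) − iπ/2) − κ·sin θ_i(t) ) | ≤ C·ε. (To leading order, the four neighbors of the runaway central oscillator librate sinusoidally with amplitude ε about the offset ε/(2κ): the leading-order ansatz satisfies each θ-equation of the minimal model with residual O(ε), while the terms being balanced are of size O(1).) -/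
open Real

/-- Lindstedt-series verification for the minimal frequency-spiral model (`κ = 1+√2`,
large central frequency `ω = 1/ε`): with `Ω = 1 − 2ε²`, `ζ(t) = (Ω/ε)t`, and
`θ_i(t) = ε(1/(2κ) − cos(ζ(t) − iπ/2))`, the leading-order ansatz satisfies each
`θ`-equation `dθ_i/dt = sin(ζ − θ_i − iπ/2) − κ sin θ_i` with residual `O(ε)`,
uniformly in `t`: the four neighbors librate sinusoidally with amplitude `ε` about
the offset `ε/(2κ)`. -/
theorem minimalSpiral_lindstedt_theta_residual :
    ∃ C : ℝ, 0 < C ∧ ∃ ε₀ : ℝ, 0 < ε₀ ∧ ε₀ < 1 ∧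
      ∀ ε : ℝ, 0 < ε → ε < ε₀ → ∀ (i : Fin 4) (t : ℝ),
        let κ : ℝ := 1 + Real.sqrt 2
        let Ω : ℝ := 1 - 2 * ε ^ 2
        let θi : ℝ → ℝ := fun s =>
          ε * (1 / (2 * κ) - Real.cos ((Ω / ε) * s - ((i : ℕ) : ℝ) * (Real.pi / 2)))
        |deriv θi t -
            (Real.sin ((Ω / ε) * t - θi t - ((i : ℕ) : ℝ) * (Real.pi / 2)) -
              κ * Real.sin (θi t))| ≤ C * ε := by
  refine ⟨12, by norm_num, 1/2, by norm_num, by norm_num, ?_⟩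
  intro ε hε hε' i t κ Ω θi
  set φ : ℝ := ((i : ℕ) : ℝ) * (Real.pi / 2) with hφ
  have hκ1 : (1:ℝ) ≤ κ := by
    have := Real.sqrt_nonneg 2; simp only [κ]; linarith
  have hκ3 : κ ≤ 3 := by
    have h2 : Real.sqrt 2 ^ 2 = 2 := Real.sq_sqrt (by norm_num)
    have := Real.sqrt_nonneg 2
    simp only [κ]; nlinarith
  -- derivative
  have hd : HasDerivAt θi (Ω * Real.sin ((Ω / ε) * t - φ)) t := by
    have h1 : HasDerivAt (fun s : ℝ => (Ω / ε) * s - φ) (Ω / ε) t := by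
      simpa using ((hasDerivAt_id t).const_mul (Ω / ε)).sub_const φ
    have h2 := (Real.hasDerivAt_cos ((Ω / ε) * t - φ)).comp t h1
    have h3 := ((hasDerivAt_const t (1 / (2 * κ))).sub h2).const_mul ε
    convert h3 using 1
    any_goals rfl
    field_simp [hε.ne']
    ring
  rw [hd.deriv]
  set x : ℝ := (Ω / ε) * t - φ with hx
  set θ : ℝ := θi t with hθdef
  have hrw : (Ω / ε) * t - θ - φ = x - θ := by rw [hx]; ring
  rw [hrw, Real.sin_sub x θ]
  -- bound on θ
  have hcosx : |Real.cos x| ≤ 1 := Real.abs_cos_le_one x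
  have hsinx : |Real.sin x| ≤ 1 := Real.abs_sin_le_one x
  have hθ : |θ| ≤ 2 * ε := by
    have : |1 / (2 * κ) - Real.cos x| ≤ 2 := by
      have h1 : (0:ℝ) < 2 * κ := by linarith
      have h2 : 1 / (2 * κ) ≤ 1 := by
        rw [div_le_one h1]; linarith
      have h3 : (0:ℝ) ≤ 1 / (2 * κ) := by positivity
      have := abs_le.1 hcosx
      rw [abs_le]; constructor <;> linarith
    calc |θ| = |ε| * |1 / (2 * κ) - Real.cos x| := by
          rw [hθdef]; simp only [θi]; rw [abs_mul]
      _ ≤ ε * 2 := by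
          rw [abs_of_pos hε]; exact mul_le_mul_of_nonneg_left this hε.le
      _ = 2 * ε := by ring
  have hsinθ : |Real.sin θ| ≤ 2 * ε := (Real.abs_sin_le_abs).trans hθ
  have h1c : 1 - Real.cos θ ≤ |θ| := by
    have hs : Real.sin (θ / 2) ^ 2 = 1 / 2 - Real.cos (2 * (θ / 2)) / 2 :=
      Real.sin_sq_eq_half_sub (θ / 2)
    have h2 : (2 : ℝ) * (θ / 2) = θ := by ring
    rw [h2] at hs
    have ha : |Real.sin (θ / 2)| ≤ |θ / 2| := Real.abs_sin_le_abs
    have hb : |Real.sin (θ / 2)| ≤ 1 := Real.abs_sin_le_one _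
    have hc : Real.sin (θ / 2) ^ 2 ≤ |θ / 2| := by
      calc Real.sin (θ / 2) ^ 2 = |Real.sin (θ / 2)| * |Real.sin (θ / 2)| := by
            rw [← abs_mul, ← sq, abs_of_nonneg (sq_nonneg _)]
        _ ≤ |θ / 2| * 1 := mul_le_mul ha hb (abs_nonneg _) (abs_nonneg _)
        _ = |θ / 2| := mul_one _
    have hd2 : |θ / 2| = |θ| / 2 := by rw [abs_div]; norm_num
    nlinarith
  have hΩc : |Ω - Real.cos θ| ≤ 2 * ε ^ 2 + |θ| := by
    have hcθ : Real.cos θ ≤ 1 := Real.cos_le_one θ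
    have habs := abs_nonneg θ
    simp only [Ω]
    rw [abs_le]; constructor <;> nlinarith
  have hε2 : ε ^ 2 ≤ ε := by nlinarith
  calc |Ω * Real.sin x -
        (Real.sin x * Real.cos θ - Real.cos x * Real.sin θ - κ * Real.sin θ)|
      = |Real.sin x * (Ω - Real.cos θ) + (Real.cos x + κ) * Real.sin θ| := by
        ring_nf
    _ ≤ |Real.sin x * (Ω - Real.cos θ)| + |(Real.cos x + κ) * Real.sin θ| :=
        abs_add_le _ _
    _ = |Real.sin x| * |Ω - Real.cos θ| + |Real.cos x + κ| * |Real.sin θ| := by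
        rw [abs_mul, abs_mul]
    _ ≤ 1 * (2 * ε ^ 2 + |θ|) + 4 * (2 * ε) := by
        have h4 : |Real.cos x + κ| ≤ 4 := by
          have := abs_le.1 hcosx
          rw [abs_le]; constructor <;> linarith
        gcongr
    _ ≤ 12 * ε := by
        have := hθ
        nlinarith
end
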